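/- For any finite set Y of points in the Boolean hypercube {0,1}^m with |Y| ≥ 1, the number of coordinates captured by Y is at most |Y| - 1, where a pair (x,y) captures coordinate j if j is the largest coordinate where x and y differ, and Y captures j if some pair of distinct points in Y captures j. -/

import Mathlib

def capSet {m : ℕ} (Y : Finset (Fin m → Bool)) : Set (Fin m) :=
  {j : Fin m | ∃ x ∈ Y, ∃ y ∈ Y, x ≠ y ∧ x j ≠ y j ∧
      ∀ i : Fin m, x i ≠ y i → i ≤ j}

lemma capSet_mono {m : ℕ} {Y Z : Finset (Fin m → Bool)} (h : Y ⊆ Z) :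
    capSet Y ⊆ capSet Z := by
  rintro j ⟨x, hx, y, hy, hxy, hj, hmax⟩
  exact ⟨x, h hx, y, h hy, hxy, hj, hmax⟩

lemma cap_aux {m : ℕ} : ∀ n (Y : Finset (Fin m → Bool)), Y.card = n → Y.Nonempty →
    (capSet Y).ncard ≤ Y.card - 1 := by
  intro n
  induction n using Nat.strong_induction_on with
  | _ n ih =>
    intro Y hcard hY
    rcases Set.eq_empty_or_nonempty (capSet Y) with he | hne
    · simp [he]
    · -- maximal captured coordinate
      classical
      obtain ⟨j, hjmem, hjmax⟩ := Set.exists_max_image (capSet Y) id (Set.toFinite _) hne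
      set Y0 := Y.filter (fun x => x j = false) with hY0
      set Y1 := Y.filter (fun x => x j = true) with hY1
      obtain ⟨x, hx, y, hy, hxy, hj, hmax⟩ := hjmem
      have hY0ne : Y0.Nonempty := by
        cases h : x j with
        | false => exact ⟨x, Finset.mem_filter.2 ⟨hx, h⟩⟩
        | true =>
          refine ⟨y, Finset.mem_filter.2 ⟨hy, ?_⟩⟩
          cases hyj : y j
          · rfl
          · exact absurd (h.trans hyj.symm) hj
      have hY1ne : Y1.Nonempty := by
        cases h : x j with
        | false =>
          refine ⟨y, Finset.mem_filter.2 ⟨hy, ?_⟩⟩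
          cases hyj : y j
          · exact absurd (h.trans hyj.symm) hj
          · rfl
        | true => exact ⟨x, Finset.mem_filter.2 ⟨hx, h⟩⟩
      have hsum : Y0.card + Y1.card = Y.card := by
        rw [hY0, hY1]
        have := Finset.card_filter_add_card_filter_not
          (s := Y) (p := fun x => x j = false)
        simp only [Bool.not_eq_false] at this
        convert this using 3
      have hsub : capSet Y ⊆ insert j (capSet Y0 ∪ capSet Y1) := by
        rintro k ⟨a, ha, b, hb, hab, hk, hkmax⟩
        by_cases hjk : a j = b j
        · cases hjv : a j
          · refine Set.mem_insert_of_mem _ (Set.mem_union_left _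
              ⟨a, Finset.mem_filter.2 ⟨ha, hjv⟩, b, Finset.mem_filter.2 ⟨hb, hjk ▸ hjv⟩,
                hab, hk, hkmax⟩)
          · refine Set.mem_insert_of_mem _ (Set.mem_union_right _
              ⟨a, Finset.mem_filter.2 ⟨ha, hjv⟩, b, Finset.mem_filter.2 ⟨hb, hjk ▸ hjv⟩,
                hab, hk, hkmax⟩)
        · have h1 : j ≤ k := hkmax j hjk
          have h2 : k ≤ j := hjmax k ⟨a, ha, b, hb, hab, hk, hkmax⟩
          have : k = j := le_antisymm h2 h1
          exact this ▸ Set.mem_insert _ _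
      have hb0 : (capSet Y0).ncard ≤ Y0.card - 1 := by
        apply ih Y0.card ?_ Y0 rfl hY0ne
        have : Y1.card ≥ 1 := Finset.card_pos.2 hY1ne
        omega
      have hb1 : (capSet Y1).ncard ≤ Y1.card - 1 := by
        apply ih Y1.card ?_ Y1 rfl hY1ne
        have : Y0.card ≥ 1 := Finset.card_pos.2 hY0ne
        omega
      have hle : (capSet Y).ncard ≤ (insert j (capSet Y0 ∪ capSet Y1)).ncard :=
        Set.ncard_le_ncard hsub (Set.toFinite _)
      have hins : (insert j (capSet Y0 ∪ capSet Y1)).ncard ≤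
          1 + ((capSet Y0).ncard + (capSet Y1).ncard) := by
        calc (insert j (capSet Y0 ∪ capSet Y1)).ncard
            ≤ (capSet Y0 ∪ capSet Y1).ncard + 1 := Set.ncard_insert_le _ _
          _ ≤ ((capSet Y0).ncard + (capSet Y1).ncard) + 1 :=
              Nat.add_le_add_right (Set.ncard_union_le _ _) 1
          _ = 1 + ((capSet Y0).ncard + (capSet Y1).ncard) := by omega
      have h0pos : 1 ≤ Y0.card := Finset.card_pos.2 hY0ne
      have h1pos : 1 ≤ Y1.card := Finset.card_pos.2 hY1ne
      omega

theorem stmt0 {m : ℕ} (Y : Finset (Fin m → Bool)) (hY : Y.Nonempty) :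
    {j : Fin m | ∃ x ∈ Y, ∃ y ∈ Y, x ≠ y ∧ x j ≠ y j ∧
      ∀ i : Fin m, x i ≠ y i → i ≤ j}.ncard ≤ Y.card - 1 := by
  exact cap_aux Y.card Y rfl hY
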